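/- If φ - λ(1-φ) ≤ 0 (with λ, ω > 0, φ ∈ [0,1]), then the one-dimensional seasonal logistic Poincaré map S̄(x) = u(φω, e^{-λ(1-φ)ω} x), where u(t,y) = y/(y+(1-y)e^{-t}), satisfies S̄(x) < x for every x > 0; hence S̄ has no positive fixed point and every orbit converges to 0. -/
import Mathlib


/-- If `φ - λ(1-φ) ≤ 0` then the one-dimensional seasonal logistic Poincaré map
`S̄(x) = u(φω, e^{-λ(1-φ)ω} x)` satisfies `S̄(x) < x` for all `x > 0`; hence it has
no positive fixed point and every orbit converges to `0`. -/
theorem stmt_19 (lam ω φ : ℝ) (hlam : 0 < lam) (hω : 0 < ω)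
    (hφ : φ ∈ Set.Icc (0 : ℝ) 1) (hneg : φ - lam * (1 - φ) ≤ 0)
    (S : ℝ → ℝ)
    (hS : ∀ x, S x = Real.exp (-lam * (1 - φ) * ω) * x /
      (Real.exp (-lam * (1 - φ) * ω) * x +
        (1 - Real.exp (-lam * (1 - φ) * ω) * x) * Real.exp (-(φ * ω)))) :
    (∀ x : ℝ, 0 < x → S x < x) ∧
    (∀ x : ℝ, 0 < x → S x ≠ x) ∧
    (∀ x : ℝ, 0 ≤ x → Filter.Tendsto (fun n => S^[n] x) Filter.atTop (nhds 0)) := by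
  obtain ⟨hφ0, hφ1⟩ := hφ
  set a := Real.exp (-lam * (1 - φ) * ω) with ha
  set e := Real.exp (-(φ * ω)) with he
  have hapos : 0 < a := Real.exp_pos _
  have hepos : 0 < e := Real.exp_pos _
  have he1 : e ≤ 1 := by
    rw [he, Real.exp_le_one_iff]; nlinarith
  have hae : a ≤ e := by
    rw [ha, he, Real.exp_le_exp]; nlinarith
  have hDpos : ∀ x : ℝ, 0 ≤ x → 0 < a * x + (1 - a * x) * e := by
    intro x hx
    nlinarith [mul_nonneg hapos.le hx]
  have haltD : ∀ x : ℝ, 0 < x → a < a * x + (1 - a * x) * e := by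
    intro x hx
    rcases eq_or_lt_of_le hφ0 with hφ0' | hφ0'
    · have he' : e = 1 := by rw [he, ← hφ0']; simp
      have ha' : a < 1 := by
        rw [ha, ← hφ0', Real.exp_lt_one_iff]; nlinarith
      rw [he']; nlinarith
    · have helt : e < 1 := by
        rw [he, Real.exp_lt_one_iff]; nlinarith
      nlinarith [mul_pos hapos hx]
  have hlt : ∀ x : ℝ, 0 < x → S x < x := by
    intro x hx
    rw [hS, div_lt_iff₀ (hDpos x hx.le)]
    nlinarith [haltD x hx]
  have hSpos : ∀ x : ℝ, 0 < x → 0 < S x := by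
    intro x hx
    rw [hS]
    exact div_pos (mul_pos hapos hx) (hDpos x hx.le)
  have hS0 : S 0 = 0 := by rw [hS]; simp
  refine ⟨hlt, fun x hx => (hlt x hx).ne, ?_⟩
  intro x hx
  rcases eq_or_lt_of_le hx with h0 | h0
  · have hfix : ∀ n, S^[n] x = 0 := by
      intro n
      rw [← h0]
      exact Function.iterate_fixed hS0 n
    simp only [hfix]
    exact tendsto_const_nhds
  · have hpos : ∀ n, 0 < S^[n] x := by
      intro n
      induction n with
      | zero => simpa using h0
      | succ n ih => rw [Function.iterate_succ_apply']; exact hSpos _ ih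
    have hanti : Antitone (fun n => S^[n] x) := by
      apply antitone_nat_of_succ_le
      intro n
      rw [Function.iterate_succ_apply']
      exact (hlt _ (hpos n)).le
    have hbdd : BddBelow (Set.range fun n => S^[n] x) :=
      ⟨0, by rintro y ⟨n, rfl⟩; exact (hpos n).le⟩
    have htend := tendsto_atTop_ciInf hanti hbdd
    set L := ⨅ n, S^[n] x with hL
    have hL0 : 0 ≤ L := le_ciInf fun n => (hpos n).le
    have hScont : ContinuousAt S L := by
      have hfun : S = fun y => a * y / (a * y + (1 - a * y) * e) := funext hS
      rw [hfun]
      exact ContinuousAt.div (by fun_prop) (by fun_prop) (hDpos L hL0).ne'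
    have h1 : Filter.Tendsto (fun n => S (S^[n] x)) Filter.atTop (nhds (S L)) :=
      hScont.tendsto.comp htend
    have h2 : Filter.Tendsto (fun n => S^[n + 1] x) Filter.atTop (nhds L) :=
      htend.comp (Filter.tendsto_add_atTop_nat 1)
    have hfix : S L = L := by
      refine tendsto_nhds_unique ?_ h2
      simpa [Function.iterate_succ_apply'] using h1
    rcases eq_or_lt_of_le hL0 with h | h
    · rwa [← h] at htend
    · exact absurd hfix (ne_of_lt (hlt L h))
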